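/- Assume Ω ∈ (0, π/2). Let (M, θ) be an admissible curve with plane curve Z = (x̂, ŷ) and maximal curvature e, and suppose e < 1/R_a. Then M ≥ l and the quantity ζ₀ := −(x̂(l) − R_a sin Ω)·sin Ω + (ŷ(l) − R_a (1 − cos Ω))·cos Ω satisfies ζ₀ < 0. -/

import Mathlib

open Real

/-- `φ` is `K`-Lipschitz on `[0, L]`. -/
def LipOn (φ : ℝ → ℝ) (L K : ℝ) : Prop :=
  ∀ s ∈ Set.Icc (0:ℝ) L, ∀ t ∈ Set.Icc (0:ℝ) L, |φ s - φ t| ≤ K * |s - t|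

/-- The maximal curvature of the curve `(L, φ)`: the least Lipschitz constant of `φ`
(essential supremum of `φ'`) on `[0, L]`. -/
noncomputable def maxCurv (φ : ℝ → ℝ) (L : ℝ) : ℝ :=
  sInf {K : ℝ | 0 ≤ K ∧ LipOn φ L K}

/-- An admissible curve for the data `(Ω, b₁, b₂)` : a pair `(L, φ)` with `L > 0`,
`φ` nondecreasing and Lipschitz on `[0, L]`, `φ 0 = 0`, `φ L = Ω`,
`∫₀^L cos (φ s) ds = b₁` and `∫₀^L sin (φ s) ds = b₂`. -/
def Admissible (Ω b₁ b₂ L : ℝ) (φ : ℝ → ℝ) : Prop :=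
  0 < L ∧ MonotoneOn φ (Set.Icc 0 L) ∧ (∃ K : ℝ, 0 ≤ K ∧ LipOn φ L K) ∧
  φ 0 = 0 ∧ φ L = Ω ∧
  (∫ s in (0:ℝ)..L, Real.cos (φ s)) = b₁ ∧
  (∫ s in (0:ℝ)..L, Real.sin (φ s)) = b₂

/-- First coordinate of the associated plane curve. -/
noncomputable def xcoord (φ : ℝ → ℝ) (s : ℝ) : ℝ := ∫ t in (0:ℝ)..s, Real.cos (φ t)

/-- Second coordinate of the associated plane curve. -/
noncomputable def ycoord (φ : ℝ → ℝ) (s : ℝ) : ℝ := ∫ t in (0:ℝ)..s, Real.sin (φ t)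

/-- If `Ω ∈ (0, π/2)` and the admissible curve `(M, θ)` has maximal curvature
`e < 1/R_a`, then `M ≥ l = R_a Ω` and
`ζ₀ = −(x̂(l) − R_a sin Ω) sin Ω + (ŷ(l) − R_a (1 − cos Ω)) cos Ω < 0`. -/
theorem stmt7 (Ω R_a D b₁ b₂ M : ℝ) (θ : ℝ → ℝ)
    (hΩ : Ω ∈ Set.Ioo 0 (Real.pi / 2)) (hRa : 0 < R_a) (hD : 0 ≤ D)
    (hb₁ : b₁ = R_a * Real.sin Ω + D * Real.cos Ω)
    (hb₂ : b₂ = R_a * (1 - Real.cos Ω) + D * Real.sin Ω)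
    (h : Admissible Ω b₁ b₂ M θ)
    (he : maxCurv θ M < 1 / R_a) :
    R_a * Ω ≤ M ∧
    -(xcoord θ (R_a * Ω) - R_a * Real.sin Ω) * Real.sin Ω
      + (ycoord θ (R_a * Ω) - R_a * (1 - Real.cos Ω)) * Real.cos Ω < 0 := by
  obtain ⟨hΩ0, hΩ2⟩ := hΩ
  obtain ⟨hM, hmono, ⟨K₀, hK₀0, hK₀⟩, hθ0, hθM, hx, hy⟩ := h
  have hSne : ({K : ℝ | 0 ≤ K ∧ LipOn θ M K}).Nonempty := ⟨K₀, hK₀0, hK₀⟩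
  obtain ⟨e, he0, heLip, he⟩ : ∃ e : ℝ, 0 ≤ e ∧ LipOn θ M e ∧ e < 1 / R_a := by
    refine ⟨maxCurv θ M, le_csInf hSne fun K hK => hK.1, ?_, he⟩
    intro s hs t ht
    rcases eq_or_ne s t with rfl | hst
    · simp
    · have habs : 0 < |s - t| := abs_pos.2 (sub_ne_zero.2 hst)
      have h1 : |θ s - θ t| / |s - t| ≤ maxCurv θ M :=
        le_csInf hSne fun K hK => (div_le_iff₀ habs).2 (hK.2 s hs t ht)
      exact (div_le_iff₀ habs).1 h1
  -- M ≥ l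
  have hΩM : Ω ≤ e * M := by
    have := heLip M ⟨hM.le, le_rfl⟩ 0 ⟨le_rfl, hM.le⟩
    rw [hθ0, hθM, sub_zero, sub_zero, abs_of_pos hΩ0, abs_of_pos hM] at this
    exact this
  have heRa : e * R_a < 1 := (lt_div_iff₀ hRa).1 he
  obtain ⟨l, hl⟩ : ∃ l : ℝ, l = R_a * Ω := ⟨_, rfl⟩
  rw [← hl]
  have hl0 : 0 < l := hl ▸ mul_pos hRa hΩ0
  have hlM : l < M := by nlinarith [(lt_div_iff₀ hRa).1 he]
  refine ⟨hlM.le, ?_⟩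
  have hlRa : l / R_a = Ω := by rw [hl]; field_simp
  -- bounds on θ on [0, l]
  have hθnn : ∀ s ∈ Set.Icc (0:ℝ) l, 0 ≤ θ s := fun s hs => by
    have := hmono ⟨le_rfl, hM.le⟩ ⟨hs.1, hs.2.trans hlM.le⟩ hs.1
    rwa [hθ0] at this
  have hθle : ∀ s ∈ Set.Icc (0:ℝ) l, θ s ≤ e * s := fun s hs => by
    have := heLip s ⟨hs.1, hs.2.trans hlM.le⟩ 0 ⟨le_rfl, hM.le⟩
    rw [hθ0, sub_zero, sub_zero, abs_of_nonneg hs.1] at this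
    exact (le_abs_self _).trans this
  have hes : ∀ s ∈ Set.Icc (0:ℝ) l, e * s ≤ s / R_a := fun s hs => by
    calc e * s ≤ (1 / R_a) * s := mul_le_mul_of_nonneg_right he.le hs.1
    _ = s / R_a := by ring
  have hsΩ : ∀ s ∈ Set.Icc (0:ℝ) l, s / R_a ≤ Ω := fun s hs => by
    rw [div_le_iff₀ hRa]; nlinarith [hs.2]
  -- continuity of θ
  have hcont : ContinuousOn θ (Set.Icc 0 M) := by
    have : LipschitzOnWith (Real.toNNReal e) θ (Set.Icc 0 M) := by
      rw [lipschitzOnWith_iff_dist_le_mul]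
      intro s hs t ht
      rw [Real.dist_eq, Real.dist_eq, Real.coe_toNNReal e he0]
      exact heLip s hs t ht
    exact this.continuousOn
  have hcontl : ContinuousOn θ (Set.Icc 0 l) := hcont.mono (Set.Icc_subset_Icc le_rfl hlM.le)
  have huIcc : Set.uIcc (0:ℝ) l = Set.Icc 0 l := Set.uIcc_of_le hl0.le
  have hIcos : IntervalIntegrable (fun s => Real.cos (θ s)) MeasureTheory.volume 0 l :=
    (Real.continuous_cos.comp_continuousOn hcontl).intervalIntegrable_of_Icc hl0.le
  have hIsin : IntervalIntegrable (fun s => Real.sin (θ s)) MeasureTheory.volume 0 l :=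
    (Real.continuous_sin.comp_continuousOn hcontl).intervalIntegrable_of_Icc hl0.le
  have hcF1 : ContinuousOn (fun s => Real.sin (θ s - Ω)) (Set.Icc 0 l) :=
    Real.continuous_sin.comp_continuousOn (hcontl.sub continuousOn_const)
  have hcF2 : Continuous (fun s : ℝ => Real.sin (s / R_a - Ω)) :=
    Real.continuous_sin.comp ((continuous_id.div_const R_a).sub continuous_const)
  have hI1 : IntervalIntegrable (fun s => Real.sin (θ s - Ω)) MeasureTheory.volume 0 l :=
    hcF1.intervalIntegrable_of_Icc hl0.le
  have hI2 : IntervalIntegrable (fun s : ℝ => Real.sin (s / R_a - Ω)) MeasureTheory.volume 0 l :=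
    hcF2.intervalIntegrable 0 l
  have hint2 : (∫ s in (0:ℝ)..l, Real.sin (s / R_a - Ω)) = R_a * (Real.cos Ω - 1) := by
    rw [intervalIntegral.integral_comp_div (f := fun u => Real.sin (u - Ω)) hRa.ne',
        intervalIntegral.integral_comp_sub_right (f := Real.sin) Ω,
        integral_sin, zero_div, hlRa]
    simp [Real.cos_neg, smul_eq_mul]
  have h1 : (∫ s in (0:ℝ)..l, Real.sin (θ s - Ω))
      = Real.cos Ω * ycoord θ l - Real.sin Ω * xcoord θ l := by
    have : (fun s => Real.sin (θ s - Ω))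
        = fun s => Real.sin (θ s) * Real.cos Ω - Real.cos (θ s) * Real.sin Ω := by
      funext s; rw [Real.sin_sub]
    rw [this, intervalIntegral.integral_sub (hIsin.mul_const _) (hIcos.mul_const _),
        intervalIntegral.integral_mul_const, intervalIntegral.integral_mul_const]
    unfold xcoord ycoord
    ring
  have hkey : -(xcoord θ l - R_a * Real.sin Ω) * Real.sin Ω
      + (ycoord θ l - R_a * (1 - Real.cos Ω)) * Real.cos Ω
      = ∫ s in (0:ℝ)..l, (Real.sin (θ s - Ω) - Real.sin (s / R_a - Ω)) := by
    rw [intervalIntegral.integral_sub hI1 hI2, h1, hint2]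
    nlinarith [Real.sin_sq_add_cos_sq Ω]
  rw [hkey]
  have hmem1 : ∀ s ∈ Set.Icc (0:ℝ) l, θ s - Ω ∈ Set.Icc (-(Real.pi/2)) (Real.pi/2) := by
    intro s hs
    constructor
    · have := hθnn s hs; linarith
    · have := (hθle s hs).trans ((hes s hs).trans (hsΩ s hs))
      linarith
  have hmem2 : ∀ s ∈ Set.Icc (0:ℝ) l, s / R_a - Ω ∈ Set.Icc (-(Real.pi/2)) (Real.pi/2) := by
    intro s hs
    have h1 : 0 ≤ s / R_a := div_nonneg hs.1 hRa.le
    have h2 := hsΩ s hs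
    constructor <;> linarith
  have hlt : (∫ s in (0:ℝ)..l, (Real.sin (θ s - Ω) - Real.sin (s / R_a - Ω)))
      < ∫ _s in (0:ℝ)..l, (0:ℝ) := by
    apply intervalIntegral.integral_lt_integral_of_continuousOn_of_le_of_exists_lt hl0
      (hcF1.sub hcF2.continuousOn) continuousOn_const
    · intro x hx
      have hx' : x ∈ Set.Icc (0:ℝ) l := ⟨hx.1.le, hx.2⟩
      have hle : θ x - Ω ≤ x / R_a - Ω := by
        have := (hθle x hx').trans (hes x hx')
        linarith
      have := Real.strictMonoOn_sin.monotoneOn (hmem1 x hx') (hmem2 x hx') hle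
      simp only [Pi.sub_apply]
      linarith
    · refine ⟨l, ⟨hl0.le, le_rfl⟩, ?_⟩
      have hll : l ∈ Set.Icc (0:ℝ) l := ⟨hl0.le, le_rfl⟩
      have hstrict : θ l - Ω < l / R_a - Ω := by
        have h1 := hθle l hll
        have h2 : e * l < l / R_a := by
          calc e * l < (1 / R_a) * l := mul_lt_mul_of_pos_right he hl0
          _ = l / R_a := by ring
        linarith
      have := Real.strictMonoOn_sin (hmem1 l hll) (hmem2 l hll) hstrict
      simp only [Pi.sub_apply]
      rw [hlRa] at this ⊢
      simp at this ⊢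
      linarith
  simpa using hlt
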